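/- Let k ≥ 0 and consider the weight B_k(Θ) = (x_N/|x|)^k on the upper half-sphere S^{N-1}_+ = S^{N-1} ∩ {x_N > 0}. For each coordinate function u_i(x) = x_i with 1 ≤ i ≤ N-1, restricted to S^{N-1}_+, one has: (a) ∫_{S^{N-1}_+} u_i B_k dΘ = 0, and (b) ∫_{S^{N-1}_+} |∇_Θ u_i|² B_k dΘ = (N-1+k) ∫_{S^{N-1}_+} u_i² B_k dΘ, where ∇_Θ denotes the spherical gradient. -/

import Mathlib

open Real MeasureTheory Metric Set

section Aux

/-- The radial Gaussian moment `∫_{(0,∞)} r^q e^{-r²/2} dr`. -/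
noncomputable def Drad (q : ℝ) : ℝ := ∫ r in Ioi (0:ℝ), r ^ q * exp (-(1/2) * r ^ 2)

lemma rpow_two_eq (x : ℝ) : x ^ (2:ℝ) = x ^ 2 := by
  rw [show (2:ℝ) = ((2:ℕ):ℝ) by norm_num, Real.rpow_natCast]

lemma Drad_eq {q : ℝ} (hq : -1 < q) :
    Drad q = (1/2:ℝ) ^ (-(q+1)/2) * (1/2) * Gamma ((q+1)/2) := by
  rw [show Drad q = ∫ r in Ioi (0:ℝ), r ^ q * exp (-(1/2) * r ^ (2:ℝ)) by
    unfold Drad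
    refine setIntegral_congr_fun measurableSet_Ioi fun r _ => ?_
    simp only [rpow_two_eq]]
  exact integral_rpow_mul_exp_neg_mul_rpow two_pos hq (by norm_num)

lemma Drad_pos {q : ℝ} (hq : -1 < q) : 0 < Drad q := by
  rw [Drad_eq hq]
  have h1 : 0 < (q+1)/2 := by linarith
  have := Real.Gamma_pos_of_pos h1
  positivity

lemma Drad_rec {q : ℝ} (hq : -1 < q) : Drad (q + 2) = (q + 1) * Drad q := by
  rw [Drad_eq hq, Drad_eq (by linarith : (-1:ℝ) < q + 2)]
  have h1 : (q + 2 + 1)/2 = (q+1)/2 + 1 := by ring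
  rw [h1, Real.Gamma_add_one (ne_of_gt (by linarith : (0:ℝ) < (q+1)/2))]
  have h2 : (-(q + 2 + 1)/2 : ℝ) = -(q+1)/2 + (-1) := by ring
  rw [h2, Real.rpow_add (by norm_num : (0:ℝ) < 1/2), Real.rpow_neg_one]
  ring

lemma gauss_integral : ∫ t : ℝ, exp (-(1/2) * t ^ 2) = 2 * Drad 0 := by
  have h1 : ∫ t : ℝ, exp (-(1/2) * t ^ 2) = √(π / (1/2)) := integral_gaussian (1/2)
  have h2 : Drad 0 = √(π / (1/2)) / 2 := by
    rw [show Drad 0 = ∫ r in Ioi (0:ℝ), exp (-(1/2) * r ^ 2) by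
      unfold Drad
      refine setIntegral_congr_fun measurableSet_Ioi fun r _ => ?_
      rw [Real.rpow_zero, one_mul]]
    exact integral_gaussian_Ioi (1/2)
  rw [h1, h2]; ring

lemma even_integral {f : ℝ → ℝ} (hf : Integrable f) (he : ∀ t, f (-t) = f t) :
    ∫ t : ℝ, f t = 2 * ∫ t in Ioi (0:ℝ), f t := by
  have h1 : ∫ t in Iic (0:ℝ), f t = ∫ t in Ioi (0:ℝ), f t := by
    have := integral_comp_neg_Ioi (0:ℝ) f
    simp only [he, neg_zero] at this
    exact this.symm
  rw [← intervalIntegral.integral_Iic_add_Ioi hf.integrableOn hf.integrableOn, h1]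
  ring

lemma gauss_sq_integral : ∫ t : ℝ, t ^ 2 * exp (-(1/2) * t ^ 2) = 2 * Drad 0 := by
  have hint : Integrable (fun t : ℝ => t ^ 2 * exp (-(1/2) * t ^ 2)) := by
    have := integrable_rpow_mul_exp_neg_mul_sq (by norm_num : (0:ℝ) < 1/2)
      (by norm_num : (-1:ℝ) < 2)
    refine this.congr (Filter.Eventually.of_forall fun t => ?_)
    simp only [rpow_two_eq]
  rw [even_integral hint (fun t => by ring_nf)]
  have : ∫ t in Ioi (0:ℝ), t ^ 2 * exp (-(1/2) * t ^ 2) = Drad 2 := by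
    unfold Drad
    refine (setIntegral_congr_fun measurableSet_Ioi fun r _ => ?_).symm
    simp only [rpow_two_eq]
  rw [this, show (2:ℝ) = 0 + 2 by ring, Drad_rec (by norm_num)]
  ring

lemma gauss_odd_integral : ∫ t : ℝ, t * exp (-(1/2) * t ^ 2) = 0 := by
  have h := integral_neg_eq_self (fun t : ℝ => t * exp (-(1/2) * t ^ 2)) volume
  simp only [neg_mul, neg_sq] at h
  have h2 : ∫ t : ℝ, -(t * exp (-(1/2) * t ^ 2)) = ∫ t : ℝ, t * exp (-(1/2) * t ^ 2) := by
    simpa using h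
  rw [integral_neg] at h2
  linarith

/-- Generalized polar-coordinates formula for integrals over `EuclideanSpace ℝ (Fin N)`
of functions that split as a spherical part times a radial part. -/
lemma polar_lemma {N : ℕ} (hN : 0 < N) (G : EuclideanSpace ℝ (Fin N) → ℝ)
    (h : sphere (0 : EuclideanSpace ℝ (Fin N)) 1 → ℝ) (ψ : ℝ → ℝ)
    (hG : ∀ (θ : sphere (0 : EuclideanSpace ℝ (Fin N)) 1) (r : ℝ), 0 < r →
      G (r • (θ : EuclideanSpace ℝ (Fin N))) = h θ * ψ r) :
    ∫ x, G x = (∫ θ, h θ ∂(volume : Measure (EuclideanSpace ℝ (Fin N))).toSphere) *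
      ∫ r in Ioi (0:ℝ), r ^ (N - 1) * ψ r := by
  haveI : Nontrivial (EuclideanSpace ℝ (Fin N)) :=
    Module.nontrivial_of_finrank_pos (R := ℝ) (by rw [finrank_euclideanSpace_fin]; omega)
  have dimE : Module.finrank ℝ (EuclideanSpace ℝ (Fin N)) = N := finrank_euclideanSpace_fin
  have MP := (volume : Measure (EuclideanSpace ℝ (Fin N))).measurePreserving_homeomorphUnitSphereProd
  rw [dimE] at MP
  calc ∫ x, G x
      = ∫ x : ({0}ᶜ : Set (EuclideanSpace ℝ (Fin N))), G x
          ∂((volume : Measure (EuclideanSpace ℝ (Fin N))).comap (↑)) := by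
        rw [integral_subtype_comap (measurableSet_singleton 0).compl,
          MeasureTheory.restrict_compl_singleton]
    _ = ∫ p : (sphere (0 : EuclideanSpace ℝ (Fin N)) 1 × Ioi (0:ℝ)),
          G (((homeomorphUnitSphereProd (EuclideanSpace ℝ (Fin N))).symm p :
            ({0}ᶜ : Set (EuclideanSpace ℝ (Fin N)))) : EuclideanSpace ℝ (Fin N))
          ∂((volume : Measure (EuclideanSpace ℝ (Fin N))).toSphere.prod
            (.volumeIoiPow (N - 1))) := by
        rw [← MP.integral_comp (Homeomorph.measurableEmbedding _)
          (fun p => G (((homeomorphUnitSphereProd (EuclideanSpace ℝ (Fin N))).symm p :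
            ({0}ᶜ : Set (EuclideanSpace ℝ (Fin N)))) : EuclideanSpace ℝ (Fin N)))]
        simp
    _ = ∫ p : sphere (0 : EuclideanSpace ℝ (Fin N)) 1 × Ioi (0:ℝ), h p.1 * ψ p.2
          ∂((volume : Measure (EuclideanSpace ℝ (Fin N))).toSphere.prod
            (.volumeIoiPow (N - 1))) := by
        refine integral_congr_ae (ae_of_all _ fun p => ?_)
        simp only [homeomorphUnitSphereProd_symm_apply_coe]
        exact hG p.1 p.2 p.2.2
    _ = (∫ θ, h θ ∂(volume : Measure (EuclideanSpace ℝ (Fin N))).toSphere) *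
          ∫ r : Ioi (0:ℝ), ψ r ∂(Measure.volumeIoiPow (N-1)) :=
        integral_prod_mul h (fun r : Ioi (0:ℝ) => ψ r)
    _ = (∫ θ, h θ ∂(volume : Measure (EuclideanSpace ℝ (Fin N))).toSphere) *
          ∫ r in Ioi (0:ℝ), r ^ (N - 1) * ψ r := by
        congr 1
        simp only [Measure.volumeIoiPow, ENNReal.ofReal]
        rw [integral_withDensity_eq_integral_smul
          ((measurable_subtype_coe.pow_const _).real_toNNReal),
          integral_subtype_comap measurableSet_Ioi (fun a : ℝ => (a ^ (N-1)).toNNReal • ψ a)]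
        refine setIntegral_congr_fun measurableSet_Ioi fun r hr => ?_
        rw [NNReal.smul_def, Real.coe_toNNReal _ (pow_nonneg hr.out.le _), smul_eq_mul]

/-- Fubini for a product of one-variable functions over `EuclideanSpace`. -/
lemma fubini_euclidean {N : ℕ} (g : Fin N → ℝ → ℝ) :
    ∫ x : EuclideanSpace ℝ (Fin N), ∏ j, g j (x j) = ∏ j, ∫ t, g j t := by
  rw [← ((EuclideanSpace.volume_preserving_symm_measurableEquiv_toLp (Fin N)).symm _).integral_comp'
    (fun x : EuclideanSpace ℝ (Fin N) => ∏ j, g j (x j))]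
  simp only [MeasurableEquiv.symm_symm, MeasurableEquiv.symm_mk, MeasurableEquiv.coe_mk]
  rw [← MeasureTheory.integral_fin_nat_prod_eq_prod g]
  rfl

lemma prodIfTwo' {N : ℕ} {i n : Fin N} (hin : i ≠ n) (f g : Fin N → ℝ) :
    ∏ j, (if j = i then f j else if j = n then g j else 1) = f i * g n := by
  classical
  rw [← Finset.mul_prod_erase Finset.univ _ (Finset.mem_univ i), if_pos rfl]
  congr 1
  have h1 : ∀ j ∈ Finset.univ.erase i,
      (if j = i then f j else if j = n then g j else 1) = (if j = n then g j else 1) :=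
    fun j hj => by rw [if_neg (Finset.mem_erase.mp hj).1]
  rw [Finset.prod_congr rfl h1, Finset.prod_ite_eq' (Finset.univ.erase i) n g,
    if_pos (Finset.mem_erase.mpr ⟨Ne.symm hin, Finset.mem_univ n⟩)]

lemma sphere_sum_sq {N : ℕ} (θ : sphere (0 : EuclideanSpace ℝ (Fin N)) 1) :
    ∑ j, ((θ : EuclideanSpace ℝ (Fin N)) j) ^ 2 = 1 := by
  have h : ‖(θ : EuclideanSpace ℝ (Fin N))‖ = 1 := by
    simpa [mem_sphere_iff_norm] using θ.2
  have h2 := EuclideanSpace.norm_eq (θ : EuclideanSpace ℝ (Fin N))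
  rw [h] at h2
  simp only [Real.norm_eq_abs, sq_abs] at h2
  have h3 : (0:ℝ) ≤ ∑ j, ((θ : EuclideanSpace ℝ (Fin N)) j) ^ 2 :=
    Finset.sum_nonneg fun j _ => sq_nonneg _
  calc ∑ j, ((θ : EuclideanSpace ℝ (Fin N)) j) ^ 2
      = (√(∑ j, ((θ : EuclideanSpace ℝ (Fin N)) j) ^ 2)) ^ 2 := (Real.sq_sqrt h3).symm
    _ = 1 := by rw [← h2]; norm_num

lemma sphere_coord_abs_le {N : ℕ} (θ : sphere (0 : EuclideanSpace ℝ (Fin N)) 1) (j : Fin N) :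
    |(θ : EuclideanSpace ℝ (Fin N)) j| ≤ 1 := by
  rw [← sq_le_one_iff_abs_le_one]
  calc ((θ : EuclideanSpace ℝ (Fin N)) j) ^ 2
      ≤ ∑ l, ((θ : EuclideanSpace ℝ (Fin N)) l) ^ 2 :=
        Finset.single_le_sum (f := fun l => ((θ : EuclideanSpace ℝ (Fin N)) l) ^ 2)
          (fun l _ => sq_nonneg _) (Finset.mem_univ j)
    _ = 1 := sphere_sum_sq θ

lemma sphere_integrable {N : ℕ} (i n : Fin N) (m : ℕ) {k : ℝ} (hk : 0 ≤ k) :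
    Integrable (fun θ : sphere (0 : EuclideanSpace ℝ (Fin N)) 1 =>
      ((θ : EuclideanSpace ℝ (Fin N)) i) ^ m * ((θ : EuclideanSpace ℝ (Fin N)) n) ^ k)
      ((volume : Measure (EuclideanSpace ℝ (Fin N))).toSphere) := by
  have h1 : Continuous fun θ : sphere (0 : EuclideanSpace ℝ (Fin N)) 1 =>
      (θ : EuclideanSpace ℝ (Fin N)) i :=
    (EuclideanSpace.proj i).continuous.comp continuous_subtype_val
  have h2 : Continuous fun θ : sphere (0 : EuclideanSpace ℝ (Fin N)) 1 =>
      (θ : EuclideanSpace ℝ (Fin N)) n :=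
    (EuclideanSpace.proj n).continuous.comp continuous_subtype_val
  have hr : Measurable (fun x : ℝ => x ^ k) := by measurability
  have hmeas : Measurable fun θ : sphere (0 : EuclideanSpace ℝ (Fin N)) 1 =>
      ((θ : EuclideanSpace ℝ (Fin N)) i) ^ m * ((θ : EuclideanSpace ℝ (Fin N)) n) ^ k :=
    (h1.measurable.pow_const m).mul (hr.comp h2.measurable)
  refine (integrable_const (1:ℝ)).mono' hmeas.aestronglyMeasurable
    (Filter.Eventually.of_forall fun θ => ?_)
  rw [norm_mul, norm_pow]
  have hb1 : ‖(θ : EuclideanSpace ℝ (Fin N)) i‖ ≤ 1 := sphere_coord_abs_le θ i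
  have hb2 : ‖((θ : EuclideanSpace ℝ (Fin N)) n) ^ k‖ ≤ 1 := by
    rw [Real.norm_eq_abs]
    calc |((θ : EuclideanSpace ℝ (Fin N)) n) ^ k|
        ≤ |(θ : EuclideanSpace ℝ (Fin N)) n| ^ k := Real.abs_rpow_le_abs_rpow _ _
      _ ≤ 1 := Real.rpow_le_one (abs_nonneg _) (sphere_coord_abs_le θ n) hk
  calc ‖(θ : EuclideanSpace ℝ (Fin N)) i‖ ^ m * ‖((θ : EuclideanSpace ℝ (Fin N)) n) ^ k‖
      ≤ 1 ^ m * 1 := by gcongr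
    _ = 1 := by norm_num

/-- The coordinate-wise factors of the Gaussian test functions. -/
noncomputable def gfun {N : ℕ} (i n : Fin N) (k : ℝ) (m : ℕ) (j : Fin N) (t : ℝ) : ℝ :=
  (if j = i then t ^ m else if j = n then Set.indicator (Ioi 0) (fun s => s ^ k) t else 1) *
    exp (-(1/2) * t ^ 2)

lemma moment {N : ℕ} (hN : 2 ≤ N) {k : ℝ} (hk : 0 ≤ k) {i n : Fin N} (hin : i ≠ n) (m : ℕ) :
    (∫ θ in {x : sphere (0 : EuclideanSpace ℝ (Fin N)) 1 |
          0 < (x : EuclideanSpace ℝ (Fin N)) n},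
        ((θ : EuclideanSpace ℝ (Fin N)) i) ^ m * ((θ : EuclideanSpace ℝ (Fin N)) n) ^ k
        ∂(volume : Measure (EuclideanSpace ℝ (Fin N))).toSphere) *
      Drad ((m : ℝ) + k + ((N:ℝ) - 1)) =
    ∏ j : Fin N, (if j = i then (∫ t : ℝ, t ^ m * exp (-(1/2) * t ^ 2))
      else if j = n then Drad k else (∫ t : ℝ, exp (-(1/2) * t ^ 2))) := by
  have hNpos : 0 < N := by omega
  set Sph := {x : sphere (0 : EuclideanSpace ℝ (Fin N)) 1 |
      0 < (x : EuclideanSpace ℝ (Fin N)) n} with hSph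
  have hS : MeasurableSet Sph := by
    have hc : Continuous fun θ : sphere (0 : EuclideanSpace ℝ (Fin N)) 1 =>
        (θ : EuclideanSpace ℝ (Fin N)) n :=
      (EuclideanSpace.proj n).continuous.comp continuous_subtype_val
    exact measurableSet_lt measurable_const hc.measurable
  set hm : sphere (0 : EuclideanSpace ℝ (Fin N)) 1 → ℝ :=
    Sph.indicator (fun θ => ((θ : EuclideanSpace ℝ (Fin N)) i) ^ m *
      ((θ : EuclideanSpace ℝ (Fin N)) n) ^ k) with hhm
  set ψ : ℝ → ℝ := fun r => r ^ m * (r ^ k * exp (-(1/2) * r ^ 2)) with hψ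
  have key : ∀ (θ : sphere (0 : EuclideanSpace ℝ (Fin N)) 1) (r : ℝ), 0 < r →
      (fun x : EuclideanSpace ℝ (Fin N) => ∏ j, gfun i n k m j (x j))
        (r • (θ : EuclideanSpace ℝ (Fin N))) = hm θ * ψ r := by
    intro θ r hr
    have hcoord : ∀ j, (r • (θ : EuclideanSpace ℝ (Fin N))) j =
        r * (θ : EuclideanSpace ℝ (Fin N)) j := fun j => rfl
    simp only [gfun, hcoord]
    rw [Finset.prod_mul_distrib, prodIfTwo' hin, ← Real.exp_sum]
    have hsum : ∑ j, (-(1/2) * (r * (θ : EuclideanSpace ℝ (Fin N)) j) ^ 2) =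
        -(1/2) * r ^ 2 := by
      have hc : ∀ j ∈ Finset.univ, -(1/2) * (r * (θ : EuclideanSpace ℝ (Fin N)) j) ^ 2 =
          (-(1/2) * r ^ 2) * ((θ : EuclideanSpace ℝ (Fin N)) j) ^ 2 := fun j _ => by ring
      rw [Finset.sum_congr rfl hc, ← Finset.mul_sum, sphere_sum_sq, mul_one]
    rw [hsum]
    by_cases hθn : 0 < (θ : EuclideanSpace ℝ (Fin N)) n
    · have hmem : r * (θ : EuclideanSpace ℝ (Fin N)) n ∈ Ioi (0:ℝ) := mul_pos hr hθn
      rw [Set.indicator_of_mem hmem, hhm, Set.indicator_of_mem (by exact hθn : θ ∈ Sph)]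
      rw [Real.mul_rpow hr.le hθn.le, mul_pow, hψ]
      ring
    · have hnot : r * (θ : EuclideanSpace ℝ (Fin N)) n ∉ Ioi (0:ℝ) := by
        simp only [mem_Ioi, not_lt]
        exact mul_nonpos_of_nonneg_of_nonpos hr.le (le_of_not_gt hθn)
      rw [Set.indicator_of_notMem hnot, hhm,
        Set.indicator_of_notMem (by exact hθn : θ ∉ Sph)]
      try ring
  have hp := polar_lemma hNpos (fun x => ∏ j, gfun i n k m j (x j)) hm ψ key
  have hf := fubini_euclidean (gfun i n k m)
  have hcoordint : ∀ j : Fin N, (∫ t : ℝ, gfun i n k m j t) =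
      (if j = i then (∫ t : ℝ, t ^ m * exp (-(1/2) * t ^ 2))
        else if j = n then Drad k else (∫ t : ℝ, exp (-(1/2) * t ^ 2))) := by
    intro j
    by_cases hji : j = i
    · subst hji
      simp only [gfun, eq_self_iff_true, if_true]
    · by_cases hjn : j = n
      · subst hjn
        simp only [gfun, if_neg hji, eq_self_iff_true, if_true]
        have heq : (fun t : ℝ => Set.indicator (Ioi 0) (fun s : ℝ => s ^ k) t *
            exp (-(1/2) * t ^ 2)) =
            fun t => Set.indicator (Ioi 0) (fun s : ℝ => s ^ k * exp (-(1/2) * s ^ 2)) t := by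
          funext t
          by_cases ht : t ∈ Ioi (0:ℝ)
          · simp [Set.indicator_of_mem ht]
          · simp [Set.indicator_of_notMem ht]
        rw [heq, integral_indicator measurableSet_Ioi]
        rfl
      · simp only [gfun, if_neg hji, if_neg hjn, one_mul]
  have hrad : ∫ r in Ioi (0:ℝ), r ^ (N - 1) * ψ r = Drad ((m:ℝ) + k + ((N:ℝ) - 1)) := by
    have hcast : ((N - 1 : ℕ) : ℝ) = (N:ℝ) - 1 := by
      have h1 : (1:ℕ) ≤ N := by omega
      push_cast [h1]
      ring
    unfold Drad
    refine setIntegral_congr_fun measurableSet_Ioi fun r hr => ?_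
    have hr0 : (0:ℝ) < r := hr
    rw [hψ, show r ^ ((m:ℝ) + k + ((N:ℝ)-1)) = r ^ (m:ℝ) * r ^ k * r ^ ((N:ℝ)-1) by
      rw [← Real.rpow_add hr0, ← Real.rpow_add hr0],
      Real.rpow_natCast, ← hcast, Real.rpow_natCast]
    ring
  rw [hp] at hf
  have hind : (∫ θ, hm θ ∂(volume : Measure (EuclideanSpace ℝ (Fin N))).toSphere)
      = ∫ θ in Sph, ((θ : EuclideanSpace ℝ (Fin N)) i) ^ m *
          ((θ : EuclideanSpace ℝ (Fin N)) n) ^ k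
          ∂(volume : Measure (EuclideanSpace ℝ (Fin N))).toSphere := by
    rw [hhm]
    exact integral_indicator hS
  rw [hind, hrad] at hf
  rw [hf]
  exact Finset.prod_congr rfl fun j _ => hcoordint j

end Aux

lemma main_aux (N : ℕ) (hN : 2 ≤ N) (k : ℝ) (hk : 0 ≤ k) (i n : Fin N) (hin : i ≠ n) :
    (∫ x in {x : sphere (0 : EuclideanSpace ℝ (Fin N)) 1 |
          0 < (x : EuclideanSpace ℝ (Fin N)) n},
        (x : EuclideanSpace ℝ (Fin N)) i * ((x : EuclideanSpace ℝ (Fin N)) n) ^ k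
        ∂(volume : Measure (EuclideanSpace ℝ (Fin N))).toSphere) = 0 ∧
    (∫ x in {x : sphere (0 : EuclideanSpace ℝ (Fin N)) 1 |
          0 < (x : EuclideanSpace ℝ (Fin N)) n},
        (1 - ((x : EuclideanSpace ℝ (Fin N)) i) ^ 2) *
          ((x : EuclideanSpace ℝ (Fin N)) n) ^ k
        ∂(volume : Measure (EuclideanSpace ℝ (Fin N))).toSphere) =
      ((N : ℝ) - 1 + k) *
        ∫ x in {x : sphere (0 : EuclideanSpace ℝ (Fin N)) 1 |
            0 < (x : EuclideanSpace ℝ (Fin N)) n},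
          ((x : EuclideanSpace ℝ (Fin N)) i) ^ 2 *
            ((x : EuclideanSpace ℝ (Fin N)) n) ^ k
          ∂(volume : Measure (EuclideanSpace ℝ (Fin N))).toSphere := by
  have hNR : (2:ℝ) ≤ (N:ℝ) := by exact_mod_cast hN
  have h0 := moment hN hk hin 0
  have h1 := moment hN hk hin 1
  have h2 := moment hN hk hin 2
  simp only [pow_zero, one_mul, Nat.cast_zero, zero_add] at h0
  simp only [pow_one, Nat.cast_one] at h1
  simp only [Nat.cast_ofNat] at h2
  rw [gauss_integral] at h0
  rw [gauss_odd_integral, gauss_integral] at h1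
  rw [gauss_sq_integral, gauss_integral] at h2
  have hq : (-1:ℝ) < k + ((N:ℝ) - 1) := by linarith
  have hq1 : (-1:ℝ) < 1 + k + ((N:ℝ) - 1) := by linarith
  have hD := (Drad_pos hq).ne'
  -- part (a)
  have hprod1 : (∏ j : Fin N, (if j = i then (0:ℝ)
      else if j = n then Drad k else 2 * Drad 0)) = 0 :=
    Finset.prod_eq_zero (Finset.mem_univ i) (by simp)
  rw [hprod1] at h1
  have ha : (∫ x in {x : sphere (0 : EuclideanSpace ℝ (Fin N)) 1 |
        0 < (x : EuclideanSpace ℝ (Fin N)) n},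
      (x : EuclideanSpace ℝ (Fin N)) i * ((x : EuclideanSpace ℝ (Fin N)) n) ^ k
      ∂(volume : Measure (EuclideanSpace ℝ (Fin N))).toSphere) = 0 := by
    rcases mul_eq_zero.mp h1 with h | h
    · exact h
    · exact absurd h (Drad_pos hq1).ne'
  refine ⟨ha, ?_⟩
  -- part (b)
  have he2 : ((2:ℝ) + k + ((N:ℝ) - 1)) = (k + ((N:ℝ) - 1)) + 2 := by ring
  rw [he2, Drad_rec hq] at h2
  have hkey : (∫ x in {x : sphere (0 : EuclideanSpace ℝ (Fin N)) 1 |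
        0 < (x : EuclideanSpace ℝ (Fin N)) n},
      ((x : EuclideanSpace ℝ (Fin N)) n) ^ k
      ∂(volume : Measure (EuclideanSpace ℝ (Fin N))).toSphere) =
      (∫ x in {x : sphere (0 : EuclideanSpace ℝ (Fin N)) 1 |
          0 < (x : EuclideanSpace ℝ (Fin N)) n},
        ((x : EuclideanSpace ℝ (Fin N)) i) ^ 2 * ((x : EuclideanSpace ℝ (Fin N)) n) ^ k
        ∂(volume : Measure (EuclideanSpace ℝ (Fin N))).toSphere) *
      (k + ((N:ℝ) - 1) + 1) := by
    apply mul_right_cancel₀ hD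
    rw [h0, ← h2]
    ring
  have hS : MeasurableSet {x : sphere (0 : EuclideanSpace ℝ (Fin N)) 1 |
      0 < (x : EuclideanSpace ℝ (Fin N)) n} := by
    have hc : Continuous fun θ : sphere (0 : EuclideanSpace ℝ (Fin N)) 1 =>
        (θ : EuclideanSpace ℝ (Fin N)) n :=
      (EuclideanSpace.proj n).continuous.comp continuous_subtype_val
    exact measurableSet_lt measurable_const hc.measurable
  have hI0 : Integrable (fun θ : sphere (0 : EuclideanSpace ℝ (Fin N)) 1 =>
      ((θ : EuclideanSpace ℝ (Fin N)) n) ^ k)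
      ((volume : Measure (EuclideanSpace ℝ (Fin N))).toSphere) := by
    have := sphere_integrable i n 0 hk
    simpa using this
  have hI2 := sphere_integrable i n 2 hk
  have hsplit : (∫ x in {x : sphere (0 : EuclideanSpace ℝ (Fin N)) 1 |
        0 < (x : EuclideanSpace ℝ (Fin N)) n},
      (1 - ((x : EuclideanSpace ℝ (Fin N)) i) ^ 2) * ((x : EuclideanSpace ℝ (Fin N)) n) ^ k
      ∂(volume : Measure (EuclideanSpace ℝ (Fin N))).toSphere) =
      (∫ x in {x : sphere (0 : EuclideanSpace ℝ (Fin N)) 1 |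
          0 < (x : EuclideanSpace ℝ (Fin N)) n},
        ((x : EuclideanSpace ℝ (Fin N)) n) ^ k
        ∂(volume : Measure (EuclideanSpace ℝ (Fin N))).toSphere) -
      (∫ x in {x : sphere (0 : EuclideanSpace ℝ (Fin N)) 1 |
          0 < (x : EuclideanSpace ℝ (Fin N)) n},
        ((x : EuclideanSpace ℝ (Fin N)) i) ^ 2 * ((x : EuclideanSpace ℝ (Fin N)) n) ^ k
        ∂(volume : Measure (EuclideanSpace ℝ (Fin N))).toSphere) := by
    rw [← integral_sub hI0.integrableOn hI2.integrableOn]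
    exact setIntegral_congr_fun hS fun θ _ => by ring
  rw [hsplit, hkey]
  ring

/-- On the open upper half-sphere `S^{N-1}₊`, with surface measure `dΘ`, weight
`B_k(Θ) = (x_N)^k` (note `|x| = 1` on the sphere), and coordinate functions `u_i(x) = x_i`
for `i ≤ N-1` (for which `|∇_Θ u_i|² = 1 - x_i²`), one has
`∫ u_i B_k dΘ = 0` and `∫ |∇_Θ u_i|² B_k dΘ = (N-1+k) ∫ u_i² B_k dΘ`. -/
theorem coordinate_eigenfunctions_halfsphere (N : ℕ) (hN : 2 ≤ N) (k : ℝ) (hk : 0 ≤ k)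
    (i : Fin N) (hi : (i : ℕ) < N - 1) :
    (∫ x in {x : sphere (0 : EuclideanSpace ℝ (Fin N)) 1 |
          0 < (x : EuclideanSpace ℝ (Fin N)) ⟨N - 1, by omega⟩},
        (x : EuclideanSpace ℝ (Fin N)) i *
          ((x : EuclideanSpace ℝ (Fin N)) ⟨N - 1, by omega⟩) ^ k
        ∂(volume : Measure (EuclideanSpace ℝ (Fin N))).toSphere) = 0 ∧
    (∫ x in {x : sphere (0 : EuclideanSpace ℝ (Fin N)) 1 |
          0 < (x : EuclideanSpace ℝ (Fin N)) ⟨N - 1, by omega⟩},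
        (1 - ((x : EuclideanSpace ℝ (Fin N)) i) ^ 2) *
          ((x : EuclideanSpace ℝ (Fin N)) ⟨N - 1, by omega⟩) ^ k
        ∂(volume : Measure (EuclideanSpace ℝ (Fin N))).toSphere) =
      ((N : ℝ) - 1 + k) *
        ∫ x in {x : sphere (0 : EuclideanSpace ℝ (Fin N)) 1 |
            0 < (x : EuclideanSpace ℝ (Fin N)) ⟨N - 1, by omega⟩},
          ((x : EuclideanSpace ℝ (Fin N)) i) ^ 2 *
            ((x : EuclideanSpace ℝ (Fin N)) ⟨N - 1, by omega⟩) ^ k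
          ∂(volume : Measure (EuclideanSpace ℝ (Fin N))).toSphere := by
  exact main_aux N hN k hk i ⟨N - 1, by omega⟩ (by
    intro h
    have : (i : ℕ) = N - 1 := by rw [h]
    omega)
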